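/- For any nonzero polynomial p in the free associative algebra K⟨X⟩ that is a non-unit, every factorization of p into atoms has the same number of factors; defining ℓ(p) to be this common number, one has ℓ(pq) = ℓ(p) + ℓ(q) for nonzero non-units p, q. -/

import Mathlib

attribute [local instance] Classical.propDecidable

namespace CohnFA

variable {K X : Type*} [Field K]

local notation "FM" => FreeMonoid X
local notation "A" => MonoidAlgebra K (FreeMonoid X)

def len (w : FreeMonoid X) : ℕ := w.toList.length

lemma len_mul (w v : FM) : len (w * v) = len w + len v := by
  simp [len, FreeMonoid.toList_mul]

lemma len_eq_zero {w : FM} (h : len w = 0) : w = 1 := by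
  have h1 : w.toList = [] := List.length_eq_zero_iff.mp h
  have h2 : (1 : FM).toList = [] := FreeMonoid.toList_one
  exact h1.trans h2.symm

noncomputable def nu (p : A) : ℕ := p.coeff.support.sup len

def Homog (n : ℕ) (p : A) : Prop := ∀ w ∈ p.coeff.support, len w = n

def DegLT (n : ℕ) (p : A) : Prop := ∀ w ∈ p.coeff.support, len w < n

lemma len_le_nu {p : A} {w : FM} (h : w ∈ p.coeff.support) : len w ≤ nu p :=
  Finset.le_sup h

lemma exists_len_eq_nu {p : A} (hp : p ≠ 0) : ∃ w ∈ p.coeff.support, len w = nu p := by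
  have h : p.coeff.support.Nonempty := Finsupp.support_nonempty_iff.2 (mt MonoidAlgebra.coeff_eq_zero.1 hp)
  obtain ⟨w, hw, hl⟩ := Finset.exists_mem_eq_sup _ h len
  exact ⟨w, hw, hl.symm⟩

noncomputable def top (p : A) : A := MonoidAlgebra.ofCoeff (p.coeff.filter (fun w => len w = nu p))

noncomputable def low (p : A) : A := MonoidAlgebra.ofCoeff (p.coeff.filter (fun w => ¬ len w = nu p))

lemma top_add_low (p : A) : top p + low p = p :=
  MonoidAlgebra.coeff_injective (Finsupp.filter_pos_add_filter_neg p.coeff _)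

lemma homog_top (p : A) : Homog (nu p) (top p) := by
  intro w hw
  rw [top, MonoidAlgebra.coeff_ofCoeff, Finsupp.support_filter, Finset.mem_filter] at hw
  exact hw.2

lemma degLT_low {p : A} : DegLT (nu p) (low p) := by
  intro w hw
  rw [low, MonoidAlgebra.coeff_ofCoeff, Finsupp.support_filter, Finset.mem_filter] at hw
  exact lt_of_le_of_ne (len_le_nu hw.1) hw.2

lemma top_ne_zero {p : A} (hp : p ≠ 0) : top p ≠ 0 := by
  obtain ⟨w, hw, hl⟩ := exists_len_eq_nu hp
  intro h
  have h1 : (top p).coeff w = p.coeff w := Finsupp.filter_apply_pos _ _ hl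
  rw [h, MonoidAlgebra.coeff_zero, Finsupp.coe_zero, Pi.zero_apply] at h1
  exact (Finsupp.mem_support_iff.1 hw) h1.symm

lemma homog_zero_of_degLT {n : ℕ} {p : A} (h1 : Homog n p) (h2 : DegLT n p) : p = 0 := by
  by_contra h
  obtain ⟨w, hw⟩ := Finsupp.support_nonempty_iff.2 (mt MonoidAlgebra.coeff_eq_zero.1 h)
  exact absurd (h1 w hw) (Nat.ne_of_lt (h2 w hw))

lemma homog_mul {m n : ℕ} {p q : A} (hp : Homog m p) (hq : Homog n q) :
    Homog (m + n) (p * q) := by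
  intro w hw
  obtain ⟨x, hx, y, hy, rfl⟩ := Finset.mem_mul.1 (MonoidAlgebra.support_coeff_mul_subset p q hw)
  rw [len_mul, hp x hx, hq y hy]

lemma degLT_mul_homog {m n : ℕ} {p q : A} (hp : DegLT m p) (hq : Homog n q) :
    DegLT (m + n) (p * q) := by
  intro w hw
  obtain ⟨x, hx, y, hy, rfl⟩ := Finset.mem_mul.1 (MonoidAlgebra.support_coeff_mul_subset p q hw)
  rw [len_mul, hq y hy]
  exact Nat.add_lt_add_right (hp x hx) n

lemma homog_mul_degLT {m n : ℕ} {p q : A} (hp : Homog m p) (hq : DegLT n q) :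
    DegLT (m + n) (p * q) := by
  intro w hw
  obtain ⟨x, hx, y, hy, rfl⟩ := Finset.mem_mul.1 (MonoidAlgebra.support_coeff_mul_subset p q hw)
  rw [len_mul, hp x hx]
  exact Nat.add_lt_add_left (hq y hy) m

lemma degLT_mul {m n : ℕ} {p q : A} (hp : DegLT m p) (hq : DegLT n q) :
    DegLT (m + n) (p * q) := by
  intro w hw
  obtain ⟨x, hx, y, hy, rfl⟩ := Finset.mem_mul.1 (MonoidAlgebra.support_coeff_mul_subset p q hw)
  rw [len_mul]
  exact Nat.add_lt_add (hp x hx) (hq y hy)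

lemma degLT_add {n : ℕ} {p q : A} (hp : DegLT n p) (hq : DegLT n q) : DegLT n (p + q) := by
  intro w hw
  rcases Finset.mem_union.1 (Finsupp.support_add (g₁ := p.coeff) (g₂ := q.coeff) hw) with h | h
  exacts [hp w h, hq w h]

/-- If `r = H + E` with `H ≠ 0` homogeneous of degree `k` and `E` of lower degree,
then `r ≠ 0`, `nu r = k` and `top r = H`. -/
lemma decomp_spec {k : ℕ} {H E : A} (hH : H ≠ 0) (hh : Homog k H) (hE : DegLT k E) :
    H + E ≠ 0 ∧ nu (H + E) = k ∧ top (H + E) = H := by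
  obtain ⟨w0, hw0⟩ := Finsupp.support_nonempty_iff.2 (mt MonoidAlgebra.coeff_eq_zero.1 hH)
  have hw0len : len w0 = k := hh w0 hw0
  have hEw0 : E.coeff w0 = 0 := by
    by_contra h
    exact absurd hw0len (Nat.ne_of_lt (hE w0 (Finsupp.mem_support_iff.2 h)))
  have hr0 : (H + E).coeff w0 ≠ 0 := by
    rw [MonoidAlgebra.coeff_add, Finsupp.add_apply, hEw0, add_zero]
    exact Finsupp.mem_support_iff.1 hw0
  have hrne : H + E ≠ 0 := fun h => hr0 (by rw [h]; rfl)
  have hnu : nu (H + E) = k := by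
    apply le_antisymm
    · apply Finset.sup_le
      intro w hw
      rcases Finset.mem_union.1 (Finsupp.support_add (g₁ := H.coeff) (g₂ := E.coeff) hw) with h | h
      · exact le_of_eq (hh w h)
      · exact le_of_lt (hE w h)
    · rw [← hw0len]
      exact len_le_nu (Finsupp.mem_support_iff.2 hr0)
  refine ⟨hrne, hnu, ?_⟩
  ext w
  by_cases h : len w = k
  · have h1 : (top (H + E)).coeff w = (H + E).coeff w := Finsupp.filter_apply_pos _ _ (by rw [hnu]; exact h)
    rw [h1, MonoidAlgebra.coeff_add, Finsupp.add_apply]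
    have : E.coeff w = 0 := by
      by_contra h'
      exact absurd h (Nat.ne_of_lt (hE w (Finsupp.mem_support_iff.2 h')))
    rw [this, add_zero]
  · have h1 : (top (H + E)).coeff w = 0 := Finsupp.filter_apply_neg _ _ (by rw [hnu]; exact h)
    rw [h1]
    symm
    by_contra h'
    exact h (hh w (Finsupp.mem_support_iff.2 h'))

lemma nu_mul {p q : A} (hp : p ≠ 0) (hq : q ≠ 0) :
    p * q ≠ 0 ∧ nu (p * q) = nu p + nu q ∧ top (p * q) = top p * top q := by
  have hdec : p * q = top p * top q + (top p * low q + low p * top q + low p * low q) := by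
    nth_rewrite 1 [← top_add_low p, ← top_add_low q]
    noncomm_ring
  have hH : top p * top q ≠ 0 := mul_ne_zero (top_ne_zero hp) (top_ne_zero hq)
  have hhom : Homog (nu p + nu q) (top p * top q) := homog_mul (homog_top p) (homog_top q)
  have hE : DegLT (nu p + nu q) (top p * low q + low p * top q + low p * low q) := by
    refine degLT_add (degLT_add ?_ ?_) ?_
    · exact homog_mul_degLT (homog_top p) degLT_low
    · exact degLT_mul_homog degLT_low (homog_top q)
    · intro w hw
      obtain ⟨x, hx, y, hy, rfl⟩ := Finset.mem_mul.1 (MonoidAlgebra.support_coeff_mul_subset _ _ hw)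
      rw [len_mul]
      exact Nat.add_lt_add (degLT_low x hx) (Nat.lt_of_lt_of_le (degLT_low y hy) (Nat.le_refl _))
  obtain ⟨h1, h2, h3⟩ := decomp_spec hH hhom hE
  rw [← hdec] at h1 h2 h3
  exact ⟨h1, h2, h3⟩

lemma nu_one : nu (1 : A) = 0 := by
  apply Nat.le_antisymm _ (Nat.zero_le _)
  apply Finset.sup_le
  intro w hw
  have : w ∈ (MonoidAlgebra.single (1 : FM) (1 : K)).coeff.support := hw
  have h1 : w = 1 := by
    have := Finsupp.support_single_subset this
    simpa using this
  simp [h1, len]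

/-- Characterization of units: nonzero scalars. -/
lemma isUnit_iff {p : A} : IsUnit p ↔ p ≠ 0 ∧ nu p = 0 := by
  constructor
  · rintro ⟨u, rfl⟩
    have h1 : (u : A) * (u⁻¹ : Aˣ) = 1 := u.mul_inv
    have hu : (u : A) ≠ 0 := by
      intro h
      rw [h, zero_mul] at h1
      exact one_ne_zero h1.symm
    have hv : ((u⁻¹ : Aˣ) : A) ≠ 0 := by
      intro h
      rw [h, mul_zero] at h1
      exact one_ne_zero h1.symm
    refine ⟨hu, ?_⟩
    have := (nu_mul hu hv).2.1
    rw [h1, nu_one] at this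
    omega
  · rintro ⟨hp, hnu⟩
    have hsub : p.coeff.support ⊆ {1} := by
      intro w hw
      have := len_le_nu hw
      rw [hnu, Nat.le_zero] at this
      simp [len_eq_zero this]
    have hps : p = MonoidAlgebra.single 1 (p.coeff 1) :=
      MonoidAlgebra.coeff_injective (Finsupp.support_subset_singleton.mp hsub)
    have hc : p.coeff 1 ≠ 0 := by
      intro h
      rw [h] at hps
      simp at hps
      exact hp hps
    refine ⟨⟨p, MonoidAlgebra.single 1 (p.coeff 1)⁻¹, ?_, ?_⟩, rfl⟩
    · nth_rewrite 1 [hps]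
      rw [MonoidAlgebra.single_mul_single, mul_one, mul_inv_cancel₀ hc]
      rfl
    · nth_rewrite 2 [hps]
      rw [MonoidAlgebra.single_mul_single, mul_one, inv_mul_cancel₀ hc]
      rfl

lemma nu_pos_of_nonunit {p : A} (hp : p ≠ 0) (hpu : ¬ IsUnit p) : 0 < nu p := by
  rcases Nat.eq_zero_or_pos (nu p) with h | h
  · exact absurd (isUnit_iff.2 ⟨hp, h⟩) hpu
  · exact h

/-- In a domain, a one-sided inverse is two-sided: `x * y = 1` makes both units. -/
lemma isUnit_of_mul_eq_one' {x y : A} (h : x * y = 1) : IsUnit x ∧ IsUnit y := by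
  have hy : y ≠ 0 := by
    intro h0
    rw [h0, mul_zero] at h
    exact one_ne_zero h.symm
  have hyx : y * x = 1 := by
    have h2 : (y * x - 1) * y = 0 := by
      rw [sub_mul, one_mul, mul_assoc, h, mul_one, sub_self]
    rcases mul_eq_zero.1 h2 with h3 | h3
    · exact sub_eq_zero.1 h3
    · exact absurd h3 hy
  exact ⟨⟨⟨x, y, h, hyx⟩, rfl⟩, ⟨⟨y, x, hyx, h⟩, rfl⟩⟩


-- ### coefficient lemmas

lemma single_mul_apply_mul (w : FM) (c : K) (Q : A) (v : FM) :
    (MonoidAlgebra.single w c * Q).coeff (w * v) = c * Q.coeff v :=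
  MonoidAlgebra.coeff_single_mul_eq_mul_coeff v (fun a _ => ⟨fun h => mul_left_cancel h, fun h => by rw [h]⟩)

lemma single_mul_apply_of_ne {w : FM} {c : K} {Q : A} {z : FM} (h : ∀ v, z ≠ w * v) :
    (MonoidAlgebra.single w c * Q).coeff z = 0 := by
  by_contra hne
  have hz : z ∈ (MonoidAlgebra.single w c * Q).coeff.support := Finsupp.mem_support_iff.2 hne
  have := MonoidAlgebra.support_coeff_mul_subset (MonoidAlgebra.single w c) Q hz
  obtain ⟨x, hx, y, hy, rfl⟩ := Finset.mem_mul.1 this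
  have hxw : x = w := by
    have := Finsupp.support_single_subset hx
    simpa using this
  exact h y (by rw [hxw])

lemma single_mul_apply_shift (w x : FM) (c : K) (Q : A) (z : FM) :
    (MonoidAlgebra.single (w * x) c * Q).coeff (w * z) = (MonoidAlgebra.single x c * Q).coeff z := by
  by_cases h : ∃ t, z = x * t
  · obtain ⟨t, rfl⟩ := h
    rw [single_mul_apply_mul, ← mul_assoc, single_mul_apply_mul]
  · push_neg at h
    rw [single_mul_apply_of_ne (fun t ht => by
          rw [mul_assoc] at ht
          exact h t (mul_left_cancel ht)),
        single_mul_apply_of_ne h]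

-- left quotient operator
noncomputable def lquo (w : FM) (P : A) : A :=
  MonoidAlgebra.ofCoeff
    (Finsupp.comapDomain (fun v => w * v) P.coeff (fun _ _ _ _ h => mul_left_cancel h))

@[simp] lemma lquo_apply (w : FM) (P : A) (v : FM) : (lquo w P).coeff v = P.coeff (w * v) :=
  Finsupp.comapDomain_apply _ _ _ _

lemma lquo_add (w : FM) (P Q : A) : lquo w (P + Q) = lquo w P + lquo w Q := by
  ext v
  rw [MonoidAlgebra.coeff_add, Finsupp.add_apply, lquo_apply, lquo_apply, lquo_apply,
    MonoidAlgebra.coeff_add, Finsupp.add_apply]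

lemma lquo_single_mul (w a₂ : FM) (b : K) :
    lquo w (MonoidAlgebra.single (w * a₂) b) = MonoidAlgebra.single a₂ b := by
  ext v
  rw [lquo_apply]
  rw [MonoidAlgebra.coeff_single, MonoidAlgebra.coeff_single, Finsupp.single_apply, Finsupp.single_apply]
  congr 1
  simp only [eq_iff_iff]
  exact ⟨fun h => mul_left_cancel h, fun h => by rw [h]⟩

lemma lquo_single_of_ne {w a : FM} (h : ∀ v, a ≠ w * v) (b : K) :
    lquo w (MonoidAlgebra.single a b) = 0 := by
  ext v
  rw [lquo_apply, MonoidAlgebra.coeff_single, Finsupp.single_apply, if_neg (h v),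
    MonoidAlgebra.coeff_zero, Finsupp.coe_zero, Pi.zero_apply]

-- prefix extraction from append equality
lemma eq_mul_of_append {a w : FM} {t v : FM} (h : a * t = w * v) (hlen : len w ≤ len a) :
    ∃ a₂, a = w * a₂ := by
  have hl : a.toList ++ t.toList = w.toList ++ v.toList := by
    have := congrArg FreeMonoid.toList h
    rwa [FreeMonoid.toList_mul, FreeMonoid.toList_mul] at this
  have hlen' : w.toList.length ≤ a.toList.length := hlen
  have htake : a.toList.take w.toList.length = w.toList := by
    rw [← List.take_append_of_le_length (l₂ := t.toList) hlen', hl, List.take_left]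
  refine ⟨FreeMonoid.ofList (a.toList.drop w.toList.length), ?_⟩
  apply FreeMonoid.toList.injective
  rw [FreeMonoid.toList_mul, FreeMonoid.toList_ofList]
  calc FreeMonoid.toList a
      = (FreeMonoid.toList a).take (FreeMonoid.toList w).length ++
        (FreeMonoid.toList a).drop (FreeMonoid.toList w).length :=
        (List.take_append_drop _ _).symm
    _ = FreeMonoid.toList w ++ (FreeMonoid.toList a).drop (FreeMonoid.toList w).length := by
        rw [htake]

lemma eq_of_append_of_len_eq {a w : FM} {t v : FM} (h : a * t = w * v) (hlen : len a = len w) :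
    a = w := by
  obtain ⟨a₂, rfl⟩ := eq_mul_of_append h (le_of_eq hlen.symm)
  rw [len_mul] at hlen
  have h0 : len a₂ = 0 := by omega
  have h1 : a₂ = 1 := by
    have h1 : a₂.toList = [] := List.length_eq_zero_iff.mp h0
    have h2 : (1 : FM).toList = [] := FreeMonoid.toList_one
    exact h1.trans h2.symm
  rw [h1, mul_one]

lemma support_insert_of_single_add {a : FM} {b : K} {f : FM →₀ K} (haf : a ∉ f.support)
    (hb : b ≠ 0) : ((Finsupp.single a b + f : FM →₀ K)).support = {a} ∪ f.support := by
  rw [Finsupp.support_add_eq, Finsupp.support_single_ne_zero a hb]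
  rw [Finsupp.support_single_ne_zero a hb]
  simpa using haf

/-- Pointwise formula for a product with a left homogeneous factor. -/
lemma homog_mul_apply {m : ℕ} {P : A} (hP : Homog m P) (Q : A) {w : FM} (hw : len w = m)
    (v : FM) : (P * Q).coeff (w * v) = P.coeff w * Q.coeff v := by
  induction P using MonoidAlgebra.induction with
  | zero => simp
  | single_add a b f haf hb ih =>
    have hsupp := support_insert_of_single_add haf hb
    have hmem : a ∈ (MonoidAlgebra.single a b + f).coeff.support := by
      change a ∈ ((Finsupp.single a b + f.coeff : FM →₀ K)).support
      rw [hsupp]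
      exact Finset.mem_union_left _ (Finset.mem_singleton_self a)
    have hla : len a = m := hP a hmem
    have hPf : Homog m f := fun x hx => hP x (by
      rw [show (MonoidAlgebra.single a b + f).coeff.support = _ from hsupp]
      exact Finset.mem_union_right _ hx)
    rw [add_mul, MonoidAlgebra.coeff_add, Finsupp.add_apply, MonoidAlgebra.coeff_add, Finsupp.add_apply,
        ih hPf, add_mul]
    congr 1
    by_cases hac : a = w
    · subst hac
      rw [single_mul_apply_mul, MonoidAlgebra.coeff_single, Finsupp.single_apply, if_pos rfl]
    · rw [single_mul_apply_of_ne, MonoidAlgebra.coeff_single, Finsupp.single_apply, if_neg hac, zero_mul]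
      intro t ht
      exact hac (eq_of_append_of_len_eq ht.symm (by rw [hla, hw]))

/-- Pointwise formula: extracting a short prefix from a product with a long homogeneous
left factor. -/
lemma homog_mul_apply_long {m n : ℕ} {B : A} (hB : Homog n B) (G : A) {w : FM}
    (hw : len w = m) (hmn : m ≤ n) (v : FM) :
    (B * G).coeff (w * v) = (lquo w B * G).coeff v := by
  induction B using MonoidAlgebra.induction with
  | zero => simp [lquo]
  | single_add a b f haf hb ih =>
    have hsupp := support_insert_of_single_add haf hb
    have hmem : a ∈ (MonoidAlgebra.single a b + f).coeff.support := by
      change a ∈ ((Finsupp.single a b + f.coeff : FM →₀ K)).support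
      rw [hsupp]
      exact Finset.mem_union_left _ (Finset.mem_singleton_self a)
    have hla : len a = n := hB a hmem
    have hBf : Homog n f := fun x hx => hB x (by
      rw [show (MonoidAlgebra.single a b + f).coeff.support = _ from hsupp]
      exact Finset.mem_union_right _ hx)
    rw [add_mul, MonoidAlgebra.coeff_add, Finsupp.add_apply, lquo_add, add_mul, MonoidAlgebra.coeff_add,
        Finsupp.add_apply, ih hBf]
    congr 1
    by_cases hpre : ∃ a₂, a = w * a₂
    · obtain ⟨a₂, rfl⟩ := hpre
      rw [single_mul_apply_shift, lquo_single_mul]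
    · push_neg at hpre
      rw [lquo_single_of_ne hpre, zero_mul, MonoidAlgebra.coeff_zero, Finsupp.coe_zero, Pi.zero_apply]
      apply single_mul_apply_of_ne
      intro t ht
      obtain ⟨a₂, ha₂⟩ := eq_mul_of_append ht.symm (by omega)
      exact hpre a₂ ha₂


/-- Rigidity of the free algebra: if `P * F = B * G` with `P, B` homogeneous of degrees
`m ≤ n`, `P ≠ 0`, `G ≠ 0`, then `P` left-divides `B`. -/
lemma rigidity {m n : ℕ} (hmn : m ≤ n) {P B F G : A} (hP : Homog m P) (hB : Homog n B)
    (hPne : P ≠ 0) (hGne : G ≠ 0) (h : P * F = B * G) :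
    ∃ C, Homog (n - m) C ∧ B = P * C := by
  obtain ⟨w0, hw0⟩ := Finsupp.support_nonempty_iff.2 (mt MonoidAlgebra.coeff_eq_zero.1 hPne)
  have hw0m : len w0 = m := hP w0 hw0
  have hlamne : P.coeff w0 ≠ 0 := Finsupp.mem_support_iff.1 hw0
  have step1 : ∀ w : FM, len w = m → lquo w B * G = P.coeff w • F := by
    intro w hw
    ext v
    have h1 : (B * G).coeff (w * v) = (lquo w B * G).coeff v := homog_mul_apply_long hB G hw hmn v
    have h2 : (P * F).coeff (w * v) = P.coeff w * F.coeff v := homog_mul_apply hP F hw v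
    rw [← h1, ← h, h2, MonoidAlgebra.coeff_smul, Finsupp.smul_apply, smul_eq_mul]
  set C : A := (P.coeff w0)⁻¹ • lquo w0 B with hC
  have hCG : C * G = F := by
    have hs := step1 w0 hw0m
    rw [hC, smul_mul_assoc, hs, smul_smul, inv_mul_cancel₀ hlamne, one_smul]
  have step2 : ∀ w : FM, len w = m → lquo w B = P.coeff w • C := by
    intro w hw
    have h1 : lquo w B * G = (P.coeff w • C) * G := by
      rw [smul_mul_assoc, hCG]
      exact step1 w hw
    have h2 : (lquo w B - P.coeff w • C) * G = 0 := by rw [sub_mul, h1, sub_self]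
    rcases mul_eq_zero.1 h2 with h3 | h3
    · exact sub_eq_zero.1 h3
    · exact absurd h3 hGne
  have hChom : Homog (n - m) C := by
    intro v hv
    have hv2 : v ∈ (lquo w0 B).coeff.support := by
      rw [hC, MonoidAlgebra.coeff_smul] at hv; exact Finsupp.support_smul hv
    have hv3 : w0 * v ∈ B.coeff.support := by
      rw [Finsupp.mem_support_iff] at hv2 ⊢
      rwa [lquo_apply] at hv2
    have := hB _ hv3
    rw [len_mul, hw0m] at this
    omega
  refine ⟨C, hChom, ?_⟩
  ext z
  by_cases hz : len z = n
  · set w : FM := FreeMonoid.ofList (z.toList.take m) with hwdef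
    set v : FM := FreeMonoid.ofList (z.toList.drop m) with hvdef
    have hzwv : z = w * v := by
      apply FreeMonoid.toList.injective
      rw [FreeMonoid.toList_mul, hwdef, hvdef, FreeMonoid.toList_ofList,
        FreeMonoid.toList_ofList, List.take_append_drop]
    have hwm : len w = m := by
      have : z.toList.length = n := hz
      simp only [len, hwdef, FreeMonoid.toList_ofList, List.length_take]
      omega
    have hBz : B.coeff (w * v) = (lquo w B).coeff v := (lquo_apply _ _ _).symm
    rw [hzwv, hBz, step2 w hwm, homog_mul_apply hP C hwm v, MonoidAlgebra.coeff_smul, Finsupp.smul_apply, smul_eq_mul]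
  · have h1 : B.coeff z = 0 := by
      by_contra h'
      exact hz (hB z (Finsupp.mem_support_iff.2 h'))
    have h2 : (P * C).coeff z = 0 := by
      by_contra h'
      have := homog_mul hP hChom z (Finsupp.mem_support_iff.2 h')
      omega
    rw [h1, h2]


/-- The conclusion of the weak-algorithm descent: `aR + bR` is principal with Bezout
witnesses, and the relation module `{(x, y) | ax = by}` is cyclic. -/
def GoodPair (a b : A) : Prop :=
  (∃ d a' b' s t, a = d * a' ∧ b = d * b' ∧ d = a * s + b * t) ∧
  (∃ u v, a * u = b * v ∧ ∀ x y, a * x = b * y → ∃ w, x = u * w ∧ y = v * w)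

lemma goodPair_symm {a b : A} (h : GoodPair a b) : GoodPair b a := by
  obtain ⟨⟨d, a', b', s, t, h1, h2, h3⟩, ⟨u, v, h4, h5⟩⟩ := h
  refine ⟨⟨d, b', a', t, s, h2, h1, by rw [h3, add_comm]⟩, ⟨v, u, h4.symm, ?_⟩⟩
  intro x y hxy
  obtain ⟨w, hw1, hw2⟩ := h5 y x hxy.symm
  exact ⟨w, hw2, hw1⟩

lemma degLT_sub {n : ℕ} {p q : A} (hp : DegLT n p) (hq : DegLT n q) : DegLT n (p - q) := by
  intro w hw
  rcases Finset.mem_union.1 (Finsupp.support_sub (f := p.coeff) (g := q.coeff) hw) with h | h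
  exacts [hp w h, hq w h]

lemma nu_lt_of_degLT {n : ℕ} {p : A} (hp : p ≠ 0) (h : DegLT n p) : nu p < n := by
  obtain ⟨w, hw, hl⟩ := exists_len_eq_nu hp
  rw [← hl]
  exact h w hw

lemma descent (N : ℕ) (a b f g : A) (ha : a ≠ 0) (hb : b ≠ 0) (hf : f ≠ 0) (hg : g ≠ 0)
    (hrel : a * f = b * g) (hN : nu a + nu b ≤ N) : GoodPair a b := by
  induction N using Nat.strong_induction_on generalizing a b f g with
  | _ N ih =>
  have main : ∀ a b f g : A, a ≠ 0 → b ≠ 0 → f ≠ 0 → g ≠ 0 → a * f = b * g →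
      nu a + nu b ≤ N → nu a ≤ nu b → GoodPair a b := by
    clear ha hb hf hg hrel hN a b f g
    intro a b f g ha hb hf hg hrel hN hab
    obtain ⟨haf_ne, hnuaf, htopaf⟩ := nu_mul ha hf
    obtain ⟨hbg_ne, hnubg, htopbg⟩ := nu_mul hb hg
    have htops : top a * top f = top b * top g := by rw [← htopaf, ← htopbg, hrel]
    obtain ⟨C, hChom, hTb⟩ := rigidity hab (homog_top a) (homog_top b)
      (top_ne_zero ha) (top_ne_zero hg) htops
    set b2 := b - a * C with hb2
    have hrel2 : a * (f - C * g) = b2 * g := by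
      rw [mul_sub, hrel, hb2, sub_mul, mul_assoc]
    have hbsplit : b = b2 + a * C := by rw [hb2]; noncomm_ring
    by_cases hb2z : b2 = 0
    · have hbC : b = a * C := by
        rw [hbsplit, hb2z, zero_add]
      refine ⟨⟨a, 1, C, 1, 0, (mul_one a).symm, hbC, by rw [mul_one, mul_zero, add_zero]⟩,
        ⟨C, 1, by rw [mul_one, hbC], ?_⟩⟩
      intro x y hxy
      refine ⟨y, mul_left_cancel₀ ha ?_, (one_mul y).symm⟩
      rw [hxy, hbC, mul_assoc]
    · have hfCg : f - C * g ≠ 0 := by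
        intro h0
        rw [h0, mul_zero] at hrel2
        exact hb2z (by
          rcases mul_eq_zero.1 hrel2.symm with h1 | h1
          · exact h1
          · exact absurd h1 hg)
      have hb2lt : nu b2 < nu b := by
        apply nu_lt_of_degLT hb2z
        have hsplit2 : b2 = (b - top b) - low a * C := by
          have h1 : a * C = top b + low a * C := by
            nth_rewrite 1 [← top_add_low a]
            rw [add_mul, ← hTb]
          rw [hb2, h1]
          noncomm_ring
        rw [hsplit2]
        apply degLT_sub
        · have : b - top b = low b := by
            nth_rewrite 1 [← top_add_low b]
            noncomm_ring
          rw [this]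
          exact degLT_low
        · by_cases hCz : C = 0
          · rw [hCz, mul_zero]
            intro w hw
            simp at hw
          · have h1 : DegLT (nu a + (nu b - nu a)) (low a * C) :=
              degLT_mul_homog degLT_low hChom
            rwa [Nat.add_sub_cancel' hab] at h1
      obtain ⟨⟨d, a0, b0, s0, t0, hda, hdb2, hd⟩, ⟨u0, v0, hu0, hker⟩⟩ :=
        ih (nu a + nu b2) (by omega) a b2 (f - C * g) g ha hb2z hfCg hg hrel2 (le_refl _)
      constructor
      · refine ⟨d, a0, b0 + a0 * C, s0 - C * t0, t0, hda, ?_, ?_⟩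
        · rw [hbsplit, hdb2, hda, mul_add, mul_assoc]
        · rw [hd, hbsplit]
          noncomm_ring
      · refine ⟨u0 + C * v0, v0, ?_, ?_⟩
        · rw [hbsplit, mul_add, add_mul, hu0, mul_assoc]
        · intro x y hxy
          have h1 : a * (x - C * y) = b2 * y := by
            rw [mul_sub, hxy, hb2, sub_mul, mul_assoc]
          obtain ⟨w, hw1, hw2⟩ := hker (x - C * y) y h1
          refine ⟨w, ?_, hw2⟩
          have h2 : x = u0 * w + C * y := by rw [← hw1]; noncomm_ring
          rw [h2, hw2, add_mul, mul_assoc]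
  by_cases hab : nu a ≤ nu b
  · exact main a b f g ha hb hf hg hrel hN hab
  · exact goodPair_symm
      (main b a g f hb ha hg hf hrel.symm (by omega) (le_of_lt (not_le.1 hab)))


lemma isUnit_both_of_mul_isUnit {x y : A} (h : IsUnit (x * y)) : IsUnit x ∧ IsUnit y := by
  obtain ⟨e, he⟩ := h
  constructor
  · have : x * (y * ↑e⁻¹) = 1 := by
      rw [← mul_assoc, ← he, Units.mul_inv]
    exact (isUnit_of_mul_eq_one' this).1
  · have : (↑e⁻¹ * x) * y = 1 := by
      rw [mul_assoc, ← he, Units.inv_mul]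
    exact (isUnit_of_mul_eq_one' this).2

/-- The key lemma: the cofactor `u` in the least common multiple `a * u = b * v` of two
non-right-associated atoms `a, b` is itself an atom. -/
lemma ker_cofactor_irred {a b u v : A} (ha : a ≠ 0) (hb : b ≠ 0) (hu : u ≠ 0)
    (hairr : Irreducible a) (hbirr : Irreducible b)
    (hndba : ¬ ∃ r, a = b * r)
    (hm : a * u = b * v)
    (hker : ∀ x y, a * x = b * y → ∃ w, x = u * w ∧ y = v * w) :
    Irreducible u := by
  have hv : v ≠ 0 := by
    rintro rfl
    rw [mul_zero] at hm
    exact (mul_ne_zero ha hu) hm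
  constructor
  · -- u is not a unit
    intro huu
    obtain ⟨e, he⟩ := huu
    have hba : a = b * (v * ↑e⁻¹) := by
      calc a = a * (↑e * ↑e⁻¹) := by rw [Units.mul_inv, mul_one]
        _ = (a * u) * ↑e⁻¹ := by rw [← mul_assoc, he]
        _ = (b * v) * ↑e⁻¹ := by rw [hm]
        _ = b * (v * ↑e⁻¹) := by rw [mul_assoc]
    exact hndba ⟨_, hba⟩
  · intro u₁ u₂ hu12
    by_contra hcon
    push_neg at hcon
    obtain ⟨h1, h2⟩ := hcon
    have hu₁ : u₁ ≠ 0 := by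
      rintro rfl
      rw [zero_mul] at hu12
      exact hu hu12
    have hu₂ : u₂ ≠ 0 := by
      rintro rfl
      rw [mul_zero] at hu12
      exact hu hu12
    have hau₁ : a * u₁ ≠ 0 := mul_ne_zero ha hu₁
    have hrel : (a * u₁) * u₂ = b * v := by rw [mul_assoc, ← hu12, hm]
    obtain ⟨⟨d', α, β, σ, τ, hd1, hd2, hd3⟩, -⟩ :=
      descent (nu (a * u₁) + nu b) (a * u₁) b u₂ v hau₁ hb hu₂ hv hrel (le_refl _)
    rcases hbirr.isUnit_or_isUnit hd2 with hd'u | hβu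
    · -- `d'` is a unit: `a*u₁` and `b` are comaximal, forcing `u₁` to be a unit
      obtain ⟨e, he⟩ := hd'u
      set σ' : A := σ * ↑e⁻¹ with hσ'
      set τ' : A := τ * ↑e⁻¹ with hτ'
      have h9 : d' * ↑e⁻¹ = 1 := by rw [← he, Units.mul_inv]
      have hbez : a * u₁ * σ' + b * τ' = 1 := by
        calc a * u₁ * σ' + b * τ' = (a * u₁ * σ + b * τ) * ↑e⁻¹ := by
              rw [hσ', hτ']; noncomm_ring
          _ = d' * ↑e⁻¹ := by rw [← hd3]
          _ = 1 := h9
      have h13 : a * u₁ * (σ' * a) + b * (τ' * a) = a := by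
        have h10 : (a * u₁ * σ' + b * τ') * a = a := by rw [hbez, one_mul]
        calc a * u₁ * (σ' * a) + b * (τ' * a) = (a * u₁ * σ' + b * τ') * a := by noncomm_ring
          _ = a := h10
      have h5 : a * (1 - u₁ * (σ' * a)) = b * (τ' * a) := by
        have h11 : a * (1 - u₁ * (σ' * a)) = a - a * u₁ * (σ' * a) := by noncomm_ring
        rw [h11]
        exact sub_eq_of_eq_add' h13.symm
      obtain ⟨ω, hω, -⟩ := hker _ _ h5
      have h15 : (1 : A) = u₁ * (σ' * a) + u * ω := by rw [← hω]; noncomm_ring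
      rw [hu12] at h15
      have h14 : u₁ * (σ' * a + u₂ * ω) = 1 := by
        calc u₁ * (σ' * a + u₂ * ω) = u₁ * (σ' * a) + u₁ * u₂ * ω := by noncomm_ring
          _ = 1 := h15.symm
      exact h1 (isUnit_of_mul_eq_one' h14).1
    · -- `β` is a unit: `a*u₁ ∈ bR`, forcing `u₂` to be a unit
      obtain ⟨e, he⟩ := hβu
      have h4 : a * u₁ = b * (↑e⁻¹ * α) := by
        rw [hd1, hd2, ← he]
        calc d' * α = d' * ((↑e * ↑e⁻¹) * α) := by rw [Units.mul_inv, one_mul]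
          _ = d' * ↑e * (↑e⁻¹ * α) := by rw [mul_assoc, mul_assoc]
      obtain ⟨w', hw1', -⟩ := hker u₁ _ h4
      rw [hu12] at hw1'
      have h8 : u₂ * w' = 1 := by
        have h16 : u₁ * 1 = u₁ * (u₂ * w') := by rw [mul_one, ← mul_assoc, ← hw1']
        exact (mul_left_cancel₀ hu₁ h16).symm
      exact h2 (isUnit_of_mul_eq_one' h8).1

/-- Comaximal transposition of a common multiple of two non-associated atoms. -/
lemma atom_transfer {a b f g : A} (hairr : Irreducible a) (hbirr : Irreducible b)
    (hnd : ¬ ∃ r, b = a * r) (hf : f ≠ 0) (hg : g ≠ 0) (hrel : a * f = b * g) :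
    ∃ u v w, Irreducible u ∧ Irreducible v ∧ a * u = b * v ∧ f = u * w ∧ g = v * w := by
  have ha := hairr.ne_zero
  have hb := hbirr.ne_zero
  have hndba : ¬ ∃ r, a = b * r := by
    rintro ⟨r, hr⟩
    rcases hairr.isUnit_or_isUnit hr with h | h
    · exact hbirr.not_isUnit h
    · obtain ⟨e, he⟩ := h
      refine hnd ⟨↑e⁻¹, ?_⟩
      rw [hr, ← he, mul_assoc, Units.mul_inv, mul_one]
  obtain ⟨-, ⟨u, v, hm, hker⟩⟩ :=
    descent (nu a + nu b) a b f g ha hb hf hg hrel (le_refl _)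
  obtain ⟨w, hw1, hw2⟩ := hker f g hrel
  have hu : u ≠ 0 := by
    rintro rfl
    rw [zero_mul] at hw1
    exact hf hw1
  have hv : v ≠ 0 := by
    rintro rfl
    rw [zero_mul] at hw2
    exact hg hw2
  have hui : Irreducible u := ker_cofactor_irred ha hb hu hairr hbirr hndba hm hker
  have hker' : ∀ x y, b * x = a * y → ∃ w, x = v * w ∧ y = u * w := by
    intro x y hxy
    obtain ⟨w, h1, h2⟩ := hker y x hxy.symm
    exact ⟨w, h2, h1⟩
  have hvi : Irreducible v := ker_cofactor_irred hb ha hv hbirr hairr hnd hm.symm hker'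
  exact ⟨u, v, w, hui, hvi, hm, hw1, hw2⟩


/-- Atomicity: every nonzero non-unit factors into irreducibles. -/
lemma exists_factorization : ∀ (n : ℕ) (p : A), p ≠ 0 → ¬ IsUnit p → nu p ≤ n →
    ∃ L : List A, (∀ x ∈ L, Irreducible x) ∧ L.prod = p := by
  intro n
  induction n using Nat.strong_induction_on with
  | _ n ih =>
  intro p hp hpu hpn
  by_cases hirr : Irreducible p
  · exact ⟨[p], by simp [hirr], by simp⟩
  · rw [irreducible_iff] at hirr
    push_neg at hirr
    obtain ⟨x, y, hxy, hxu, hyu⟩ := hirr hpu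
    have hx : x ≠ 0 := by rintro rfl; rw [zero_mul] at hxy; exact hp hxy
    have hy : y ≠ 0 := by rintro rfl; rw [mul_zero] at hxy; exact hp hxy
    have hnux := nu_pos_of_nonunit hx hxu
    have hnuy := nu_pos_of_nonunit hy hyu
    have hsum : nu p = nu x + nu y := by rw [hxy]; exact (nu_mul hx hy).2.1
    obtain ⟨Lx, hLx, hLxp⟩ := ih (nu x) (by omega) x hx hxu (le_refl _)
    obtain ⟨Ly, hLy, hLyp⟩ := ih (nu y) (by omega) y hy hyu (le_refl _)
    refine ⟨Lx ++ Ly, ?_, by rw [List.prod_append, hLxp, hLyp, hxy]⟩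
    intro z hz
    rcases List.mem_append.1 hz with h | h
    exacts [hLx z h, hLy z h]

/-- Uniqueness of the number of atoms in a factorization. -/
lemma length_unique : ∀ (n : ℕ) (p : A), p ≠ 0 → nu p ≤ n →
    ∀ L L' : List A, (∀ x ∈ L, Irreducible x) → (∀ x ∈ L', Irreducible x) →
    L.prod = p → L'.prod = p → L.length = L'.length := by
  intro n
  induction n using Nat.strong_induction_on with
  | _ n ih =>
  intro p hp hpn L L' hL hL' hLp hL'p
  match L, L' with
  | [], [] => rfl
  | [], b :: Lb =>
    exfalso
    rw [List.prod_nil] at hLp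
    rw [List.prod_cons] at hL'p
    have : IsUnit (b * Lb.prod) := by rw [hL'p, ← hLp]; exact isUnit_one
    exact (hL' b (by simp)).not_isUnit (isUnit_both_of_mul_isUnit this).1
  | a :: La, [] =>
    exfalso
    rw [List.prod_nil] at hL'p
    rw [List.prod_cons] at hLp
    have : IsUnit (a * La.prod) := by rw [hLp, ← hL'p]; exact isUnit_one
    exact (hL a (by simp)).not_isUnit (isUnit_both_of_mul_isUnit this).1
  | a :: La, b :: Lb =>
    rw [List.prod_cons] at hLp hL'p
    have hairr : Irreducible a := hL a (by simp)
    have hbirr : Irreducible b := hL' b (by simp)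
    have hLa : ∀ x ∈ La, Irreducible x := fun x hx => hL x (by simp [hx])
    have hLb : ∀ x ∈ Lb, Irreducible x := fun x hx => hL' x (by simp [hx])
    have ha := hairr.ne_zero
    have hb := hbirr.ne_zero
    set f := La.prod with hfdef
    set g := Lb.prod with hgdef
    have hf : f ≠ 0 := by
      intro h0
      rw [h0, mul_zero] at hLp
      exact hp hLp.symm
    have hg : g ≠ 0 := by
      intro h0
      rw [h0, mul_zero] at hL'p
      exact hp hL'p.symm
    have hrel : a * f = b * g := by rw [hLp, hL'p]
    have hnup1 : nu p = nu a + nu f := by rw [← hLp]; exact (nu_mul ha hf).2.1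
    have hnup2 : nu p = nu b + nu g := by rw [← hL'p]; exact (nu_mul hb hg).2.1
    have hnua := nu_pos_of_nonunit ha hairr.not_isUnit
    have hnub := nu_pos_of_nonunit hb hbirr.not_isUnit
    have hflt : nu f < n := by omega
    have hglt : nu g < n := by omega
    simp only [List.length_cons]
    by_cases hd : ∃ r, b = a * r
    · -- a and b are right associated
      obtain ⟨r, hr⟩ := hd
      have hru : IsUnit r := by
        rcases hbirr.isUnit_or_isUnit hr with h | h
        · exact absurd h hairr.not_isUnit
        · exact h
      have hfrg : f = r * g := by
        apply mul_left_cancel₀ ha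
        rw [hrel, hr, mul_assoc]
      match Lb, hgdef with
      | [], hgdef =>
        -- g = 1, f = r is a unit, so La = []
        have hfu : IsUnit f := by
          have hg1 : g = 1 := by rw [hgdef, List.prod_nil]
          rw [hfrg, hg1, mul_one]; exact hru
        match La, hfdef with
        | [], _ => rfl
        | c :: T, hfdef =>
          exfalso
          have : IsUnit (c * T.prod) := by rw [← List.prod_cons, ← hfdef]; exact hfu
          exact (hLa c (by simp)).not_isUnit (isUnit_both_of_mul_isUnit this).1
      | c :: T, hgdef =>
        obtain ⟨e, he⟩ := hru
        have hcirr : Irreducible ((r * c : A)) := by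
          rw [← he]
          exact (irreducible_units_mul e (y := c)).2 (hLb c (by simp))
        have hfprod : ((r * c) :: T).prod = f := by
          rw [List.prod_cons, hfrg, hgdef, List.prod_cons, mul_assoc]
        have hTirr : ∀ x ∈ (r * c) :: T, Irreducible x := by
          intro x hx
          rcases List.mem_cons.1 hx with h | h
          · rw [h]; exact hcirr
          · exact hLb x (by simp [h])
        have := ih (nu f) hflt f hf (le_refl _) La ((r * c) :: T) hLa hTirr rfl hfprod
        rw [this]
        simp
    · -- non-associated atoms: use comaximal transposition
      obtain ⟨u, v, w, hui, hvi, hm, hfw, hgw⟩ := atom_transfer hairr hbirr hd hf hg hrel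
      have hw0 : w ≠ 0 := by
        rintro rfl
        rw [mul_zero] at hfw
        exact hf hfw
      by_cases hwu : IsUnit w
      · obtain ⟨e, he⟩ := hwu
        have hfirr : Irreducible f := by
          rw [hfw, ← he]
          exact (irreducible_mul_units e (y := u)).2 hui
        have hgirr : Irreducible g := by
          rw [hgw, ← he]
          exact (irreducible_mul_units e (y := v)).2 hvi
        have h1 := ih (nu f) hflt f hf (le_refl _) La [f] hLa
          (by intro x hx; rw [List.mem_singleton.1 hx]; exact hfirr) rfl (by simp)
        have h2 := ih (nu g) hglt g hg (le_refl _) Lb [g] hLb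
          (by intro x hx; rw [List.mem_singleton.1 hx]; exact hgirr) rfl (by simp)
        rw [h1, h2]
        simp
      · obtain ⟨M, hM, hMp⟩ := exists_factorization (nu w) w hw0 hwu (le_refl _)
        have hMf : (u :: M).prod = f := by rw [List.prod_cons, hMp, hfw]
        have hMg : (v :: M).prod = g := by rw [List.prod_cons, hMp, hgw]
        have hMu : ∀ x ∈ u :: M, Irreducible x := by
          intro x hx
          rcases List.mem_cons.1 hx with h | h
          · rw [h]; exact hui
          · exact hM x h
        have hMv : ∀ x ∈ v :: M, Irreducible x := by
          intro x hx
          rcases List.mem_cons.1 hx with h | h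
          · rw [h]; exact hvi
          · exact hM x h
        have h1 := ih (nu f) hflt f hf (le_refl _) La (u :: M) hLa hMu rfl hMf
        have h2 := ih (nu g) hglt g hg (le_refl _) Lb (v :: M) hLb hMv rfl hMg
        rw [h1, h2]
        simp


lemma irreducible_map {R S : Type*} [Semiring R] [Semiring S] (φ : R ≃+* S) {x : R}
    (h : Irreducible x) : Irreducible (φ x) := by
  constructor
  · intro hu
    have h1 := hu.map φ.symm
    rw [RingEquiv.symm_apply_apply] at h1
    exact h.not_isUnit h1
  · intro y z hyz
    have hx : x = φ.symm y * φ.symm z := by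
      have h2 := congrArg φ.symm hyz
      rwa [RingEquiv.symm_apply_apply, map_mul] at h2
    rcases h.isUnit_or_isUnit hx with h1 | h1
    · left
      have h3 := h1.map φ
      rwa [RingEquiv.apply_symm_apply] at h3
    · right
      have h3 := h1.map φ
      rwa [RingEquiv.apply_symm_apply] at h3

end CohnFA

/-- In `K⟨X⟩` every factorization of a nonzero non-unit into atoms has the
same number of factors, and this length is additive on products. -/
theorem freeAlgebra_length_welldefined_and_additive {K X : Type*} [Field K]
    (p q : FreeAlgebra K X)
    (hp : p ≠ 0) (hpu : ¬ IsUnit p) (hq : q ≠ 0) (hqu : ¬ IsUnit q) :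
    (∀ L L' : List (FreeAlgebra K X),
      (∀ a ∈ L, Irreducible a) → (∀ a ∈ L', Irreducible a) →
      L.prod = p → L'.prod = p → L.length = L'.length) ∧
    (∀ L M N : List (FreeAlgebra K X),
      (∀ a ∈ L, Irreducible a) → (∀ a ∈ M, Irreducible a) →
      (∀ a ∈ N, Irreducible a) →
      L.prod = p → M.prod = q → N.prod = p * q →
      N.length = L.length + M.length) := by
  classical
  set e : FreeAlgebra K X ≃ₐ[K] MonoidAlgebra K (FreeMonoid X) :=
    FreeAlgebra.equivMonoidAlgebraFreeMonoid with he
  have hinj : ∀ r : FreeAlgebra K X, r ≠ 0 → e r ≠ 0 := by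
    intro r hr h0
    apply hr
    have h1 := congrArg e.symm h0
    rwa [AlgEquiv.symm_apply_apply, map_zero] at h1
  have key : ∀ r : FreeAlgebra K X, r ≠ 0 → ∀ L L' : List (FreeAlgebra K X),
      (∀ a ∈ L, Irreducible a) → (∀ a ∈ L', Irreducible a) →
      L.prod = r → L'.prod = r → L.length = L'.length := by
    intro r hr L L' hL hL' hLp hL'p
    have hmap : ∀ (T : List (FreeAlgebra K X)), (∀ a ∈ T, Irreducible a) →
        ∀ x ∈ T.map e, Irreducible x := by
      intro T hT x hx
      obtain ⟨y, hy, rfl⟩ := List.mem_map.1 hx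
      have h1 : Irreducible (e.toRingEquiv y) := CohnFA.irreducible_map e.toRingEquiv (hT y hy)
      simpa using h1
    have hprod : ∀ (T : List (FreeAlgebra K X)), T.prod = r → (T.map e).prod = e r := by
      intro T hT
      rw [← hT]
      exact (map_list_prod (e : FreeAlgebra K X →ₐ[K] MonoidAlgebra K (FreeMonoid X)) T).symm
    have h := CohnFA.length_unique (CohnFA.nu (e r)) (e r) (hinj r hr) (le_refl _)
      (L.map e) (L'.map e) (hmap L hL) (hmap L' hL') (hprod L hLp) (hprod L' hL'p)
    simpa using h
  constructor
  · intro L L' hL hL' h1 h2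
    exact key p hp L L' hL hL' h1 h2
  · intro L M N hL hM hN hLp hMp hNp
    have hpq : p * q ≠ 0 := by
      intro h0
      have h1 : e p * e q = 0 := by rw [← map_mul, h0, map_zero]
      rcases mul_eq_zero.1 h1 with h2 | h2
      · exact hinj p hp h2
      · exact hinj q hq h2
    have hLM : ∀ a ∈ L ++ M, Irreducible a := by
      intro a ha
      rcases List.mem_append.1 ha with h | h
      exacts [hL a h, hM a h]
    have h := key (p * q) hpq N (L ++ M) hN hLM hNp
      (by rw [List.prod_append, hLp, hMp])
    simpa using h
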